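/- arXiv:2412.02843 — 3 statements merged into one kernel-verified Lean document; each statement's English description precedes it below -/
import Mathlib

section
/- Any vector x^(0) ∈ ℝ^n with pairwise distinct entries, subjected to any infinite sequence of positive or negative transformations, reaches after finitely many steps a vector with at most 3 distinct entries, and remains with at most 3 distinct entries thereafter. -/
noncomputable def meanVec {n : ℕ} (x : Fin n → ℝ) : ℝ := (∑ i, x i) / n

noncomputable def posT {n : ℕ} (x : Fin n → ℝ) : Fin n → ℝ :=
  fun i => max (x i - meanVec x) 0

noncomputable def negT {n : ℕ} (x : Fin n → ℝ) : Fin n → ℝ :=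
  fun i => max (meanVec x - x i) 0

/-- An interior point of a finite set of reals: a member having both a strictly
smaller and a strictly larger member. -/
def InteriorPt (V : Finset ℝ) (u : ℝ) : Prop :=
  u ∈ V ∧ (∃ a ∈ V, a < u) ∧ (∃ b ∈ V, u < b)

/-- If a step map of either form acts injectively on the value set (card preserved),
then it maps interior points to interior points and preserves distances between
interior points. -/
lemma interior_step (V : Finset ℝ) (f : ℝ → ℝ) (m : ℝ)
    (hf : (∀ v, f v = max (v - m) 0) ∨ (∀ v, f v = max (m - v) 0))
    (hcard : (V.image f).card = V.card)
    {u v : ℝ} (hu : InteriorPt V u) (hv : InteriorPt V v) :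
    InteriorPt (V.image f) (f u) ∧ |f u - f v| = |u - v| := by
  have hinj : Set.InjOn f V := Finset.card_image_iff.mp hcard
  obtain ⟨huV, ⟨a, haV, hau⟩, ⟨b, hbV, hub⟩⟩ := hu
  obtain ⟨hvV, ⟨a', haV', hav⟩, ⟨b', hbV', hvb⟩⟩ := hv
  rcases hf with hf | hf
  · -- positive transformation case: f is monotone
    have hmono : ∀ p q : ℝ, p ≤ q → f p ≤ f q := by
      intro p q h; rw [hf, hf]; exact max_le_max (by linarith) le_rfl
    have hstrict : ∀ p q : ℝ, p ∈ V → q ∈ V → p < q → f p < f q := by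
      intro p q hp hq hpq
      rcases lt_or_eq_of_le (hmono p q hpq.le) with h | h
      · exact h
      · exact absurd (hinj hp hq h) hpq.ne
    have haff : ∀ w c : ℝ, w ∈ V → c ∈ V → c < w → f w = w - m := by
      intro w c hw hc hcw
      have hmw : m < w := by
        by_contra h
        push_neg at h
        have h1 : f c = 0 := by rw [hf]; exact max_eq_right (by linarith)
        have h2 : f w = 0 := by rw [hf]; exact max_eq_right (by linarith)
        exact absurd (hinj hc hw (h1.trans h2.symm)) hcw.ne
      rw [hf]; exact max_eq_left (by linarith)
    refine ⟨⟨Finset.mem_image_of_mem f huV,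
      ⟨f a, Finset.mem_image_of_mem f haV, hstrict a u haV huV hau⟩,
      ⟨f b, Finset.mem_image_of_mem f hbV, hstrict u b huV hbV hub⟩⟩, ?_⟩
    rw [haff u a huV haV hau, haff v a' hvV haV' hav]
    have : u - m - (v - m) = u - v := by ring
    rw [this]
  · -- negative transformation case: f is antitone
    have hanti : ∀ p q : ℝ, p ≤ q → f q ≤ f p := by
      intro p q h; rw [hf, hf]; exact max_le_max (by linarith) le_rfl
    have hstrict : ∀ p q : ℝ, p ∈ V → q ∈ V → p < q → f q < f p := by
      intro p q hp hq hpq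
      rcases lt_or_eq_of_le (hanti p q hpq.le) with h | h
      · exact h
      · exact absurd (hinj hq hp h) hpq.ne.symm
    have haff : ∀ w c : ℝ, w ∈ V → c ∈ V → w < c → f w = m - w := by
      intro w c hw hc hwc
      have hmw : w < m := by
        by_contra h
        push_neg at h
        have h1 : f c = 0 := by rw [hf]; exact max_eq_right (by linarith)
        have h2 : f w = 0 := by rw [hf]; exact max_eq_right (by linarith)
        exact absurd (hinj hw hc (h2.trans h1.symm)) hwc.ne
      rw [hf]; exact max_eq_left (by linarith)
    refine ⟨⟨Finset.mem_image_of_mem f huV,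
      ⟨f b, Finset.mem_image_of_mem f hbV, hstrict u b huV hbV hub⟩,
      ⟨f a, Finset.mem_image_of_mem f haV, hstrict a u haV huV hau⟩⟩, ?_⟩
    rw [haff u b huV hbV hub, haff v b' hvV hbV' hvb]
    have : m - u - (m - v) = -(u - v) := by ring
    rw [this, abs_neg]

/-- Any vector with pairwise distinct entries, subjected to an infinite sequence of
positive or negative transformations, eventually becomes (and remains) stable,
i.e. has at most 3 distinct entries. -/
theorem eventually_stable {n : ℕ} (x : ℕ → Fin n → ℝ)
    (hdistinct : Function.Injective (x 0))
    (hstep : ∀ t, x (t + 1) = posT (x t) ∨ x (t + 1) = negT (x t)) :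
    ∃ t₀, ∀ t ≥ t₀, (Finset.image (x t) Finset.univ).card ≤ 3 := by
  classical
  set V : ℕ → Finset ℝ := fun t => Finset.image (x t) Finset.univ with hVdef
  -- each step is pointwise application of a map of one of the two forms
  have hstep' : ∀ t, ∃ f : ℝ → ℝ,
      ((∀ v, f v = max (v - meanVec (x t)) 0) ∨ (∀ v, f v = max (meanVec (x t) - v) 0)) ∧
      V (t + 1) = (V t).image f := by
    intro t
    rcases hstep t with h | h
    · refine ⟨fun v => max (v - meanVec (x t)) 0, Or.inl (fun v => rfl), ?_⟩
      show Finset.image (x (t + 1)) Finset.univ = _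
      rw [h, Finset.image_image]
      rfl
    · refine ⟨fun v => max (meanVec (x t) - v) 0, Or.inr (fun v => rfl), ?_⟩
      show Finset.image (x (t + 1)) Finset.univ = _
      rw [h, Finset.image_image]
      rfl
  -- the number of distinct values is non-increasing
  have hanti : Antitone (fun t => (V t).card) := by
    apply antitone_nat_of_succ_le
    intro t
    obtain ⟨f, _, him⟩ := hstep' t
    rw [him]
    exact Finset.card_image_le
  -- hence eventually constant
  obtain ⟨t₀, ht₀⟩ : ∃ t₀, (V t₀).card = sInf (Set.range fun t => (V t).card) := by
    have h : sInf (Set.range fun t => (V t).card) ∈ Set.range fun t => (V t).card :=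
      Nat.sInf_mem ⟨(V 0).card, 0, rfl⟩
    obtain ⟨t₀, h⟩ := h
    exact ⟨t₀, h⟩
  have hconst : ∀ t, t₀ ≤ t → (V t).card = (V t₀).card := by
    intro t ht
    have h1 : (V t).card ≤ (V t₀).card := hanti ht
    have h2 : (V t₀).card ≤ (V t).card := by
      rw [ht₀]; exact Nat.sInf_le ⟨t, rfl⟩
    omega
  by_cases hk : (V t₀).card ≤ 3
  · refine ⟨t₀, fun t ht => ?_⟩
    have h : (V t).card ≤ 3 := by rw [hconst t ht]; exact hk
    exact h
  exfalso
  push_neg at hk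
  -- basic numerology
  have hcard_le_n : ∀ t, (V t).card ≤ n := by
    intro t
    calc (V t).card ≤ (Finset.univ : Finset (Fin n)).card := Finset.card_image_le
    _ = n := by simp
  have hn4 : 4 ≤ n := by have := hcard_le_n t₀; omega
  have hnR : (0:ℝ) < n := by
    have : (4:ℝ) ≤ n := by exact_mod_cast hn4
    linarith
  -- from time 1 on, all entries are nonnegative
  have hnonneg : ∀ t, 1 ≤ t → ∀ i, 0 ≤ x t i := by
    intro t ht i
    obtain ⟨s, rfl⟩ : ∃ s, t = s + 1 := ⟨t - 1, by omega⟩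
    rcases hstep s with h | h <;> rw [h] <;> exact le_max_right _ _
  set S : ℕ → ℝ := fun t => ∑ i, x t i with hSdef
  set r : ℝ := 1 - 1 / n with hrdef
  have hr0 : 0 ≤ r := by
    have h4 : (4:ℝ) ≤ n := by exact_mod_cast hn4
    have : 1 / (n:ℝ) ≤ 1 := by
      rw [div_le_one hnR]
      linarith
    simp only [hrdef]; linarith
  have hr1 : r < 1 := by
    have : 0 < 1 / (n:ℝ) := by positivity
    simp only [hrdef]; linarith
  -- sum decay
  have hdecay : ∀ t, 1 ≤ t → S (t + 1) ≤ S t * r := by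
    intro t ht
    have hx := hnonneg t ht
    have hS0 : 0 ≤ S t := Finset.sum_nonneg (fun i _ => hx i)
    set m := meanVec (x t) with hm
    have hmS : m = S t / n := rfl
    have hm0 : 0 ≤ m := by rw [hmS]; positivity
    obtain ⟨i₀, hi₀⟩ : ∃ i₀ : Fin n, m ≤ x t i₀ := by
      by_contra h
      push_neg at h
      have hne : (Finset.univ : Finset (Fin n)).Nonempty := ⟨⟨0, by omega⟩, Finset.mem_univ _⟩
      have hlt := Finset.sum_lt_sum_of_nonempty hne (fun i _ => h i)
      rw [Finset.sum_const, Finset.card_univ, Fintype.card_fin, nsmul_eq_mul] at hlt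
      have : (n:ℝ) * m = S t := by rw [hmS]; field_simp
      have hSS : S t < S t := by
        calc S t = ∑ i, x t i := rfl
        _ < (n:ℝ) * m := hlt
        _ = S t := this
      exact absurd hSS (lt_irrefl _)
    have hrS : S t * r = S t - S t / n := by rw [hrdef]; ring
    rcases hstep t with hst | hst
    · -- positive transformation
      have hpt : ∀ i, x (t + 1) i = x t i - min (x t i) m := by
        intro i
        rw [hst]
        show max (x t i - m) 0 = _
        rcases le_total (x t i) m with h | h
        · rw [min_eq_left h, max_eq_right (by linarith), sub_self]
        · rw [min_eq_right h, max_eq_left (by linarith)]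
      have hsum : S (t + 1) = S t - ∑ i, min (x t i) m := by
        show (∑ i, x (t + 1) i) = _
        simp only [hpt]
        rw [Finset.sum_sub_distrib]
      have hlow : m ≤ ∑ i, min (x t i) m := by
        have h1 : min (x t i₀) m = m := min_eq_right hi₀
        calc m = min (x t i₀) m := h1.symm
        _ ≤ ∑ i, min (x t i) m :=
          Finset.single_le_sum (fun i _ => le_min (hx i) hm0) (Finset.mem_univ i₀)
      have : S (t + 1) ≤ S t - m := by rw [hsum]; linarith
      rw [hrS]
      calc S (t + 1) ≤ S t - m := this
      _ = S t - S t / n := by rw [hmS]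
    · -- negative transformation
      have hpt : ∀ i, x (t + 1) i = max (m - x t i) 0 := by
        intro i; rw [hst]; rfl
      have hb : ∀ i, x (t + 1) i ≤ m := by
        intro i; rw [hpt]; exact max_le (by linarith [hx i]) hm0
      have hz : x (t + 1) i₀ = 0 := by
        rw [hpt]; exact max_eq_right (by linarith)
      have hsplit : S (t + 1) = (∑ i ∈ Finset.univ.erase i₀, x (t + 1) i) + x (t + 1) i₀ :=
        (Finset.sum_erase_add _ _ (Finset.mem_univ i₀)).symm
      have hbound : (∑ i ∈ Finset.univ.erase i₀, x (t + 1) i) ≤ ((n:ℝ) - 1) * m := by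
        calc (∑ i ∈ Finset.univ.erase i₀, x (t + 1) i)
            ≤ ∑ _i ∈ Finset.univ.erase i₀, m := Finset.sum_le_sum (fun i _ => hb i)
        _ = ((Finset.univ.erase i₀).card : ℝ) * m := by rw [Finset.sum_const, nsmul_eq_mul]
        _ = ((n:ℝ) - 1) * m := by
            rw [Finset.card_erase_of_mem (Finset.mem_univ i₀), Finset.card_univ, Fintype.card_fin]
            rw [Nat.cast_sub (by omega : 1 ≤ n)]
            norm_num
      have hfin : ((n:ℝ) - 1) * m = S t * r := by
        rw [hmS, hrdef]; field_simp
      rw [← hfin]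
      rw [hsplit, hz]
      linarith
  set T : ℕ := t₀ + 1 with hT
  -- geometric decay of the sum
  have hgeo : ∀ j, S (T + j) ≤ S T * r ^ j := by
    intro j
    induction j with
    | zero => simp
    | succ j ih =>
      have h1 : S (T + j + 1) ≤ S (T + j) * r := hdecay (T + j) (by omega)
      calc S (T + (j + 1)) = S (T + j + 1) := by rw [← Nat.add_assoc]
      _ ≤ S (T + j) * r := h1
      _ ≤ (S T * r ^ j) * r := mul_le_mul_of_nonneg_right ih hr0
      _ = S T * r ^ (j + 1) := by ring
  -- two interior points at time T
  have hcT : ∀ t, T ≤ t → (V t).card = (V t₀).card := fun t ht => hconst t (by omega)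
  have hne : (V T).Nonempty := by
    apply Finset.card_pos.mp
    have := hcT T le_rfl
    omega
  set M1 := (V T).min' hne with hM1
  set M2 := (V T).max' hne with hM2
  obtain ⟨u₀, hu₀I, v₀, hv₀I, huv⟩ :
      ∃ u ∈ ((V T).erase M1).erase M2, ∃ v ∈ ((V T).erase M1).erase M2, u ≠ v := by
    apply Finset.one_lt_card.mp
    have a1 : (V T).card - 1 ≤ ((V T).erase M1).card := Finset.pred_card_le_card_erase
    have a2 : ((V T).erase M1).card - 1 ≤ (((V T).erase M1).erase M2).card :=
      Finset.pred_card_le_card_erase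
    have := hcT T le_rfl
    omega
  have mkInt : ∀ w, w ∈ ((V T).erase M1).erase M2 → InteriorPt (V T) w := by
    intro w hw
    rw [Finset.mem_erase, Finset.mem_erase] at hw
    obtain ⟨hw2, hw1, hwV⟩ := hw
    exact ⟨hwV,
      ⟨M1, (V T).min'_mem hne, lt_of_le_of_ne ((V T).min'_le w hwV) (Ne.symm hw1)⟩,
      ⟨M2, (V T).max'_mem hne, lt_of_le_of_ne ((V T).le_max' w hwV) hw2⟩⟩
  set d : ℝ := |u₀ - v₀| with hd'
  have hd : 0 < d := abs_pos.mpr (sub_ne_zero.mpr huv)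
  -- invariant: at every later time there are two interior points at distance d
  have hinv : ∀ j, ∃ u v : ℝ,
      InteriorPt (V (T + j)) u ∧ InteriorPt (V (T + j)) v ∧ |u - v| = d := by
    intro j
    induction j with
    | zero => exact ⟨u₀, v₀, mkInt u₀ hu₀I, mkInt v₀ hv₀I, rfl⟩
    | succ j ih =>
      obtain ⟨u, v, hu, hv, hduv⟩ := ih
      obtain ⟨f, hf, him⟩ := hstep' (T + j)
      have hcardeq : ((V (T + j)).image f).card = (V (T + j)).card := by
        rw [← him, hcT (T + j + 1) (by omega), hcT (T + j) (by omega)]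
      have h1 := interior_step (V (T + j)) f (meanVec (x (T + j))) hf hcardeq hu hv
      have h2 := interior_step (V (T + j)) f (meanVec (x (T + j))) hf hcardeq hv hu
      refine ⟨f u, f v, ?_, ?_, ?_⟩
      · rw [show T + (j + 1) = T + j + 1 from rfl, him]; exact h1.1
      · rw [show T + (j + 1) = T + j + 1 from rfl, him]; exact h2.1
      · rw [h1.2, hduv]
  -- the sum is always at least d
  have hlow : ∀ j, d ≤ S (T + j) := by
    intro j
    obtain ⟨u, v, hu, hv, hduv⟩ := hinv j
    have hxn := hnonneg (T + j) (by omega)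
    obtain ⟨i, _, hi⟩ := Finset.mem_image.mp hu.1
    obtain ⟨i', _, hi'⟩ := Finset.mem_image.mp hv.1
    have h1 : u ≤ S (T + j) :=
      hi ▸ Finset.single_le_sum (fun i _ => hxn i) (Finset.mem_univ i)
    have h2 : v ≤ S (T + j) :=
      hi' ▸ Finset.single_le_sum (fun i _ => hxn i) (Finset.mem_univ i')
    have hu0 : 0 ≤ u := hi ▸ hxn i
    have hv0 : 0 ≤ v := hi' ▸ hxn i'
    rw [← hduv]
    rcases le_total u v with h | h
    · rw [abs_of_nonpos (by linarith)]; linarith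
    · rw [abs_of_nonneg (by linarith)]; linarith
  have hST : 0 < S T := lt_of_lt_of_le hd (by simpa using hlow 0)
  obtain ⟨j, hj⟩ := exists_pow_lt_of_lt_one (div_pos hd hST) hr1
  have hlt : S T * r ^ j < d := by
    have := (lt_div_iff₀ hST).mp hj
    linarith
  have hg := hgeo j
  have hl := hlow j
  linarith
end

section
/- Let x^(0) ∈ ℝ be a 1×n row vector with strictly increasing entries, and define X^(t+1) = ReLU(W^(t+1)(X^(t) − x̄^(t))) where W^(t+1) = [I; −I] stacks the identity and its negation and x̄^(t) is the vector of column means subtracted from each column. Then for every t ≥ 1, the first and last columns of X^(t) are orthogonal: ⟨x₁^(t), x_n^(t)⟩ = 0. -/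
/-- The rows of the layer-`t` batch representation, indexed by sequences of
positive/negative transformation choices (one per layer). There are `2^t` rows
at layer `t`, encoded by `Fin t → Bool`. -/
noncomputable def tree {n : ℕ} (x0 : Fin n → ℝ) : (t : ℕ) → (Fin t → Bool) → Fin n → ℝ
  | 0, _ => x0
  | t + 1, s =>
      (if s (Fin.last t) then posT else negT) (tree x0 t (fun j => s j.castSucc))

lemma mean_ge {n : ℕ} (hn : 0 < n) (v : Fin n → ℝ) (c : ℝ) (h : ∀ i, c ≤ v i) :
    c ≤ meanVec v := by
  have hs : (n : ℝ) * c ≤ ∑ i, v i := by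
    calc (n : ℝ) * c = ∑ _i : Fin n, c := by simp [mul_comm]
      _ ≤ ∑ i, v i := Finset.sum_le_sum fun i _ => h i
  rw [meanVec, le_div_iff₀ (by exact_mod_cast hn)]
  linarith

lemma mean_le {n : ℕ} (hn : 0 < n) (v : Fin n → ℝ) (c : ℝ) (h : ∀ i, v i ≤ c) :
    meanVec v ≤ c := by
  have hs : ∑ i, v i ≤ (n : ℝ) * c := by
    calc ∑ i, v i ≤ ∑ _i : Fin n, c := Finset.sum_le_sum fun i _ => h i
      _ = (n : ℝ) * c := by simp [mul_comm]
  rw [meanVec, div_le_iff₀ (by exact_mod_cast hn)]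
  linarith

/-- "Good" rows: monotone with first entry zero, or antitone with last entry zero. -/
def Good {n : ℕ} (hn : 0 < n) (v : Fin n → ℝ) : Prop :=
  (Monotone v ∧ v ⟨0, hn⟩ = 0) ∨ (Antitone v ∧ v ⟨n - 1, Nat.sub_lt hn one_pos⟩ = 0)

lemma step_good {n : ℕ} (hn : 0 < n) (v : Fin n → ℝ)
    (h : Monotone v ∨ Antitone v) : Good hn (posT v) ∧ Good hn (negT v) := by
  rcases h with h | h
  · have h0 : ∀ i, v ⟨0, hn⟩ ≤ v i := fun i => h (by simp [Fin.le_def])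
    have hl : ∀ i, v i ≤ v ⟨n - 1, Nat.sub_lt hn one_pos⟩ := fun i =>
      h (by simp [Fin.le_def]; omega)
    have hm1 : v ⟨0, hn⟩ ≤ meanVec v := mean_ge hn v _ h0
    have hm2 : meanVec v ≤ v ⟨n - 1, Nat.sub_lt hn one_pos⟩ := mean_le hn v _ hl
    constructor
    · left
      refine ⟨fun a b hab => max_le_max (sub_le_sub_right (h hab) _) le_rfl, ?_⟩
      simp only [posT]
      exact max_eq_right (by linarith)
    · right
      refine ⟨fun a b hab => max_le_max (sub_le_sub_left (h hab) _) le_rfl, ?_⟩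
      simp only [negT]
      exact max_eq_right (by linarith)
  · have h0 : ∀ i, v i ≤ v ⟨0, hn⟩ := fun i => h (by simp [Fin.le_def])
    have hl : ∀ i, v ⟨n - 1, Nat.sub_lt hn one_pos⟩ ≤ v i := fun i =>
      h (by simp [Fin.le_def]; omega)
    have hm1 : meanVec v ≤ v ⟨0, hn⟩ := mean_le hn v _ h0
    have hm2 : v ⟨n - 1, Nat.sub_lt hn one_pos⟩ ≤ meanVec v := mean_ge hn v _ hl
    constructor
    · right
      refine ⟨fun a b hab => max_le_max (sub_le_sub_right (h hab) _) le_rfl, ?_⟩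
      simp only [posT]
      exact max_eq_right (by linarith)
    · left
      refine ⟨fun a b hab => max_le_max (sub_le_sub_left (h hab) _) le_rfl, ?_⟩
      simp only [negT]
      exact max_eq_right (by linarith)

lemma good_mono_or_anti {n : ℕ} {hn : 0 < n} {v : Fin n → ℝ} (h : Good hn v) :
    Monotone v ∨ Antitone v := h.imp And.left And.left

lemma tree_mono_or_anti {n : ℕ} (hn : 0 < n) (x0 : Fin n → ℝ) (hmono : StrictMono x0) :
    ∀ t (s : Fin t → Bool), Monotone (tree x0 t s) ∨ Antitone (tree x0 t s) := by
  intro t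
  induction t with
  | zero => intro s; left; exact hmono.monotone
  | succ t ih =>
    intro s
    have := step_good hn _ (ih (fun j => s j.castSucc))
    by_cases hb : s (Fin.last t) <;>
      simp only [tree, hb, if_true, if_false] <;>
      [exact good_mono_or_anti this.1; exact good_mono_or_anti this.2]

lemma tree_good {n : ℕ} (hn : 0 < n) (x0 : Fin n → ℝ) (hmono : StrictMono x0)
    (t : ℕ) (s : Fin (t + 1) → Bool) : Good hn (tree x0 (t + 1) s) := by
  have := step_good hn _ (tree_mono_or_anti hn x0 hmono t (fun j => s j.castSucc))
  by_cases hb : s (Fin.last t) <;>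
    simp only [tree, hb, if_true, if_false] <;> [exact this.1; exact this.2]

/-- The first and last columns of `X^(t)` are orthogonal, for every `t ≥ 1`. -/
theorem first_last_columns_orthogonal {n : ℕ} (hn : 0 < n) (x0 : Fin n → ℝ)
    (hmono : StrictMono x0) :
    ∀ t ≥ 1,
      ∑ s : Fin t → Bool,
        tree x0 t s ⟨0, hn⟩ * tree x0 t s ⟨n - 1, Nat.sub_lt hn one_pos⟩ = 0 := by
  intro t ht
  cases t with
  | zero => omega
  | succ t =>
    apply Finset.sum_eq_zero
    intro s _
    rcases tree_good hn x0 hmono t s with ⟨hm, h0⟩ | ⟨hm, h0⟩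
    · rw [h0, zero_mul]
    · rw [h0, mul_zero]
end

section
/- Let X^(t) be an invariant representation under RC+ReLU with batch size n, let W be d×k with i.i.d. N(0, σ²) entries with σ² = 2α/d and α = n²/(n² − 2n + 2), and set X^(t+1) = ReLU(WX^(t) − μ^(t)) with μ^(t) the mean of the columns of WX^(t). Then E‖x₁^(t+1)‖² = 1 and E‖ReLU(Wν_c − μ^(t))‖² = 1/(n−1)², and x₁^(t+1) · ReLU(Wν_c − μ^(t)) = 0 almost surely. -/
open MeasureTheory ProbabilityTheory Real Filter


lemma my_integral_x_exp (b : ℝ) (hb : 0 < b) : ∫ x : ℝ, x * exp (-b * x ^ 2) = 0 := by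
  have hderiv : ∀ x : ℝ, HasDerivAt (fun y : ℝ => -(2*b)⁻¹ * exp (-b * y ^ 2))
      (x * exp (-b * x ^ 2)) x := by
    intro x
    have := ((hasDerivAt_pow 2 x).const_mul (-b)).exp.const_mul (-(2*b)⁻¹)
    refine this.congr_deriv ?_
    field_simp
    ring
  have hf' : Integrable (fun x : ℝ => x * exp (-b * x ^ 2)) := integrable_mul_exp_neg_mul_sq hb
  have hf : Integrable (fun y : ℝ => -(2*b)⁻¹ * exp (-b * y ^ 2)) :=
    (integrable_exp_neg_mul_sq hb).const_mul _
  exact integral_eq_zero_of_hasDerivAt_of_integrable hderiv hf' hf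

lemma my_integrable_sq_exp (b : ℝ) (hb : 0 < b) :
    Integrable (fun x : ℝ => x ^ 2 * exp (-b * x ^ 2)) := by
  have := integrable_rpow_mul_exp_neg_mul_sq hb (s := 2) (by norm_num)
  convert this using 2 with x
  rw [show (2:ℝ) = ((2:ℕ):ℝ) by norm_num, Real.rpow_natCast]

lemma my_integral_sq_exp (b : ℝ) (hb : 0 < b) :
    ∫ x : ℝ, x ^ 2 * exp (-b * x ^ 2) = (2*b)⁻¹ * √(π / b) := by
  have hderiv : ∀ x : ℝ, HasDerivAt (fun y : ℝ => (2*b)⁻¹ * (y * exp (-b * y ^ 2)))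
      ((2*b)⁻¹ * exp (-b * x ^ 2) - x ^ 2 * exp (-b * x ^ 2)) x := by
    intro x
    have h1 : HasDerivAt (fun y : ℝ => y * exp (-b * y ^ 2))
        (1 * exp (-b * x ^ 2) + x * (exp (-b * x ^ 2) * (-b * (2 * x)))) x := by
      have he : HasDerivAt (fun y : ℝ => exp (-b * y ^ 2)) (exp (-b * x ^ 2) * (-b * (2 * x))) x := by
        have := ((hasDerivAt_pow 2 x).const_mul (-b)).exp
        convert this using 1
        ring
      exact (hasDerivAt_id x).mul he
    have := h1.const_mul ((2*b)⁻¹)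
    refine this.congr_deriv ?_
    field_simp
    ring
  have hf' : Integrable (fun x : ℝ => (2*b)⁻¹ * exp (-b * x ^ 2) - x ^ 2 * exp (-b * x ^ 2)) :=
    ((integrable_exp_neg_mul_sq hb).const_mul _).sub (my_integrable_sq_exp b hb)
  have hf : Integrable (fun y : ℝ => (2*b)⁻¹ * (y * exp (-b * y ^ 2))) :=
    (integrable_mul_exp_neg_mul_sq hb).const_mul _
  have h0 := integral_eq_zero_of_hasDerivAt_of_integrable hderiv hf' hf
  rw [integral_sub ((integrable_exp_neg_mul_sq hb).const_mul _) (my_integrable_sq_exp b hb),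
    integral_const_mul, integral_gaussian, sub_eq_zero] at h0
  exact h0.symm

variable {s : NNReal}

lemma my_gauss_density (hs : s ≠ 0) :
    gaussianReal 0 s = volume.withDensity (fun x => ((gaussianPDFReal 0 s x).toNNReal : ENNReal)) := by
  rw [gaussianReal_of_var_ne_zero 0 hs]
  rfl

lemma my_integral_gauss (hs : s ≠ 0) (g : ℝ → ℝ) :
    ∫ x, g x ∂(gaussianReal 0 s) = ∫ x, gaussianPDFReal 0 s x * g x := by
  rw [my_gauss_density hs,
    integral_withDensity_eq_integral_smul ((measurable_gaussianPDFReal 0 s).real_toNNReal) g]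
  congr 1 with x
  simp [NNReal.smul_def, Real.coe_toNNReal _ (gaussianPDFReal_nonneg 0 s x)]

lemma my_integrable_gauss (hs : s ≠ 0) {g : ℝ → ℝ}
    (h : Integrable (fun x => gaussianPDFReal 0 s x * g x)) :
    Integrable g (gaussianReal 0 s) := by
  rw [my_gauss_density hs,
    integrable_withDensity_iff_integrable_smul ((measurable_gaussianPDFReal 0 s).real_toNNReal)]
  convert h using 2 with x
  · rfl
  simp [NNReal.smul_def, Real.coe_toNNReal _ (gaussianPDFReal_nonneg 0 s x)]

lemma my_pdf_eq (hs : s ≠ 0) (x : ℝ) :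
    gaussianPDFReal 0 s x = (√(2 * π * s))⁻¹ * exp (-(2*(s:ℝ))⁻¹ * x ^ 2) := by
  have hs' : (0:ℝ) < s := by positivity
  rw [gaussianPDFReal]
  congr 1
  rw [sub_zero]
  congr 1
  field_simp

lemma my_b_pos (hs : s ≠ 0) : (0:ℝ) < (2*(s:ℝ))⁻¹ := by
  have hs' : (0:ℝ) < s := by positivity
  positivity

lemma my_integrable_id_gauss (hs : s ≠ 0) : Integrable (fun x => x) (gaussianReal 0 s) := by
  refine my_integrable_gauss hs ?_
  have : Integrable (fun x : ℝ => (√(2 * π * s))⁻¹ * (x * exp (-(2*(s:ℝ))⁻¹ * x ^ 2))) :=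
    (integrable_mul_exp_neg_mul_sq (my_b_pos hs)).const_mul _
  convert this using 2 with x
  rw [my_pdf_eq hs]; ring

lemma my_integrable_sq_gauss (hs : s ≠ 0) : Integrable (fun x => x ^ 2) (gaussianReal 0 s) := by
  refine my_integrable_gauss hs ?_
  have : Integrable (fun x : ℝ => (√(2 * π * s))⁻¹ * (x ^ 2 * exp (-(2*(s:ℝ))⁻¹ * x ^ 2))) :=
    (my_integrable_sq_exp _ (my_b_pos hs)).const_mul _
  convert this using 2 with x
  rw [my_pdf_eq hs]; ring

lemma my_integral_id_gauss (hs : s ≠ 0) : ∫ x, x ∂(gaussianReal 0 s) = 0 := by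
  rw [my_integral_gauss hs]
  have : ∫ x : ℝ, gaussianPDFReal 0 s x * x
      = ∫ x : ℝ, (√(2 * π * s))⁻¹ * (x * exp (-(2*(s:ℝ))⁻¹ * x ^ 2)) := by
    congr 1 with x; rw [my_pdf_eq hs]; ring
  rw [this, integral_const_mul, my_integral_x_exp _ (my_b_pos hs), mul_zero]

lemma my_integral_sq_gauss (hs : s ≠ 0) : ∫ x, x ^ 2 ∂(gaussianReal 0 s) = s := by
  rw [my_integral_gauss hs]
  have : ∫ x : ℝ, gaussianPDFReal 0 s x * x ^ 2
      = ∫ x : ℝ, (√(2 * π * s))⁻¹ * (x ^ 2 * exp (-(2*(s:ℝ))⁻¹ * x ^ 2)) := by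
    congr 1 with x; rw [my_pdf_eq hs]; ring
  rw [this, integral_const_mul, my_integral_sq_exp _ (my_b_pos hs)]
  have hs' : (0:ℝ) < s := by positivity
  have h1 : ((2:ℝ) * (2*(s:ℝ))⁻¹)⁻¹ = s := by field_simp
  have h2 : π / (2*(s:ℝ))⁻¹ = 2 * π * s := by field_simp
  rw [h1, h2]
  have h3 : √(2 * π * s) ≠ 0 := by positivity
  field_simp

section pi_lemmas
variable {ι : Type*} [Fintype ι] [DecidableEq ι] {E : Type*} [MeasurableSpace E]

lemma my_pi_integral_prod (μ : Measure E) [SigmaFinite μ] (f : ι → E → ℝ) :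
    ∫ x : ι → E, ∏ i, f i (x i) ∂(Measure.pi fun _ => μ) = ∏ i, ∫ x, f i x ∂μ := by
  letI : MeasureSpace E := ⟨μ⟩
  exact MeasureTheory.integral_fintype_prod_eq_prod (ι := ι) f

lemma my_pi_map_eval (μ : Measure E) [IsProbabilityMeasure μ] (i : ι) :
    (Measure.pi fun _ : ι => μ).map (fun w => w i) = μ := by
  ext s hs
  rw [Measure.map_apply (measurable_pi_apply i) hs]
  have hp : (fun w : ι → E => w i) ⁻¹' s
      = Set.pi Set.univ (Function.update (fun _ : ι => Set.univ) i s) := by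
    ext w
    simp only [Set.mem_preimage, Set.mem_univ_pi]
    constructor
    · intro h j
      rcases eq_or_ne j i with rfl | hj
      · simpa using h
      · simp [Function.update_of_ne hj]
    · intro h
      simpa using h i
  rw [hp, Measure.pi_pi,
    Finset.prod_eq_single i (fun j _ hj => by simp [Function.update_of_ne hj]) (by simp)]
  simp

lemma my_integrable_eval (μ : Measure E) [IsProbabilityMeasure μ] (i : ι) {g : E → ℝ}
    (hgm : Measurable g) (hg : Integrable g μ) :
    Integrable (fun w : ι → E => g (w i)) (Measure.pi fun _ => μ) := by
  rw [← my_pi_map_eval μ i (ι := ι)] at hg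
  exact (integrable_map_measure hgm.aestronglyMeasurable
    (measurable_pi_apply i).aemeasurable).mp hg

lemma my_integral_eval (μ : Measure E) [IsProbabilityMeasure μ] (i : ι) {g : E → ℝ}
    (hgm : Measurable g) :
    ∫ w : ι → E, g (w i) ∂(Measure.pi fun _ => μ) = ∫ x, g x ∂μ := by
  conv_rhs => rw [← my_pi_map_eval μ i (ι := ι)]
  rw [integral_map (measurable_pi_apply i).aemeasurable]
  rw [my_pi_map_eval μ i (ι := ι)]
  exact hgm.aestronglyMeasurable

lemma my_memℒp_eval (μ : Measure E) [IsProbabilityMeasure μ] (i : ι) {g : E → ℝ}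
    (hgm : Measurable g) (hg : MemLp g 2 μ) :
    MemLp (fun w : ι → E => g (w i)) 2 (Measure.pi fun _ => μ) := by
  rw [← my_pi_map_eval μ i (ι := ι)] at hg
  exact (memLp_map_measure_iff hgm.aestronglyMeasurable
    (measurable_pi_apply i).aemeasurable).mp hg

end pi_lemmas

lemma my_integrable_mul {α : Type*} [MeasurableSpace α] {μ : Measure α} {f g : α → ℝ}
    (hf : MemLp f 2 μ) (hg : MemLp g 2 μ) : Integrable (fun x => f x * g x) μ := by
  refine Integrable.mono' ((hf.integrable_sq.add hg.integrable_sq).div_const 2)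
    (hf.1.mul hg.1) ?_
  filter_upwards with x
  rw [Real.norm_eq_abs, abs_mul]
  have h1 := sq_abs (f x)
  have h2 := sq_abs (g x)
  have h3 := sq_nonneg (|f x| - |g x|)
  simp only [Pi.add_apply]
  nlinarith
section rho
variable {k : ℕ} {v : NNReal}

lemma my_gauss_map_neg : (gaussianReal 0 v).map (fun x : ℝ => -x) = gaussianReal 0 v := by
  have h := gaussianReal_map_const_mul (μ := 0) (v := v) (-1)
  have h1 : ((-1 : ℝ) * ·) = (fun x : ℝ => -x) := by funext x; ring
  have h2 : NNReal.mk ((-1:ℝ)^2) (sq_nonneg _) = 1 := by ext; norm_num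
  rw [h1, h2, one_mul, mul_zero] at h
  exact h

lemma my_rho_map_neg :
    (Measure.pi fun _ : Fin k => gaussianReal 0 v).map (fun w => -w)
      = Measure.pi fun _ : Fin k => gaussianReal 0 v := by
  refine (Measure.pi_eq (μ := fun _ : Fin k => gaussianReal 0 v) fun s hs => ?_).symm
  rw [Measure.map_apply measurable_neg (MeasurableSet.univ_pi hs)]
  have hp : (Neg.neg : (Fin k → ℝ) → (Fin k → ℝ)) ⁻¹' Set.pi Set.univ s
      = Set.pi Set.univ fun i => Neg.neg ⁻¹' s i := by
    ext w; simp [Pi.neg_apply]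
  rw [hp, Measure.pi_pi]
  refine Finset.prod_congr rfl fun i _ => ?_
  rw [← Measure.map_apply measurable_neg (hs i), my_gauss_map_neg]

lemma my_coord_memℒp (hv : v ≠ 0) (j : Fin k) :
    MemLp (fun w : Fin k → ℝ => w j) 2 (Measure.pi fun _ : Fin k => gaussianReal 0 v) :=
  my_memℒp_eval (gaussianReal 0 v) j measurable_id
    ((memLp_two_iff_integrable_sq aestronglyMeasurable_id).mpr (my_integrable_sq_gauss hv))

lemma my_coord_mul_integrable (hv : v ≠ 0) (j j' : Fin k) :
    Integrable (fun w : Fin k → ℝ => w j * w j')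
      (Measure.pi fun _ : Fin k => gaussianReal 0 v) :=
  my_integrable_mul (my_coord_memℒp hv j) (my_coord_memℒp hv j')

lemma my_coord_mul_integral (hv : v ≠ 0) (j j' : Fin k) :
    ∫ w : Fin k → ℝ, w j * w j' ∂(Measure.pi fun _ : Fin k => gaussianReal 0 v)
      = if j = j' then (v:ℝ) else 0 := by
  rcases eq_or_ne j j' with rfl | hjj'
  · rw [if_pos rfl]
    have h1 : (fun w : Fin k → ℝ => w j * w j) = fun w => (fun t : ℝ => t ^ 2) (w j) := by
      funext w; ring
    rw [h1, my_integral_eval (gaussianReal 0 v) j (g := fun t : ℝ => t ^ 2) (by fun_prop),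
      my_integral_sq_gauss hv]
  · rw [if_neg hjj']
    have hp : (fun w : Fin k → ℝ => w j * w j')
        = fun w => ∏ m, ((if m = j then w m else 1) * (if m = j' then w m else 1)) := by
      funext w
      rw [Finset.prod_mul_distrib, Finset.prod_ite_eq' Finset.univ j (fun m => w m),
        Finset.prod_ite_eq' Finset.univ j' (fun m => w m)]
      simp
    rw [hp, my_pi_integral_prod (gaussianReal 0 v)
      (fun m t => (if m = j then t else 1) * (if m = j' then t else 1))]
    refine Finset.prod_eq_zero (Finset.mem_univ j) ?_
    have : (fun t : ℝ => (if j = j then t else 1) * (if j = j' then t else 1))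
        = fun t : ℝ => t := by
      funext t; simp [hjj']
    rw [this, my_integral_id_gauss hv]

lemma my_L_memℒp (hv : v ≠ 0) (u : Fin k → ℝ) :
    MemLp (fun w : Fin k → ℝ => ∑ j, u j * w j) 2
      (Measure.pi fun _ : Fin k => gaussianReal 0 v) := by
  exact memLp_finset_sum _ fun j _ => (my_coord_memℒp hv j).const_mul (u j)

lemma my_L_sq_integral (hv : v ≠ 0) (u : Fin k → ℝ) :
    ∫ w : Fin k → ℝ, (∑ j, u j * w j) ^ 2
      ∂(Measure.pi fun _ : Fin k => gaussianReal 0 v) = (v:ℝ) * ∑ j, u j ^ 2 := by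
  have hp : (fun w : Fin k → ℝ => (∑ j, u j * w j) ^ 2)
      = fun w => ∑ j, ∑ j', (u j * u j') * (w j * w j') := by
    funext w
    rw [sq, Finset.sum_mul_sum]
    exact Finset.sum_congr rfl fun j _ => Finset.sum_congr rfl fun j' _ => by ring
  rw [hp, integral_finset_sum _ fun j _ => integrable_finset_sum _ fun j' _ =>
    ((my_coord_mul_integrable hv j j').const_mul _)]
  have : ∀ j : Fin k, (∫ w : Fin k → ℝ, ∑ j', (u j * u j') * (w j * w j')
      ∂(Measure.pi fun _ : Fin k => gaussianReal 0 v)) = u j ^ 2 * v := by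
    intro j
    rw [integral_finset_sum _ fun j' _ => (my_coord_mul_integrable hv j j').const_mul _]
    have : ∀ j' : Fin k, (∫ w : Fin k → ℝ, (u j * u j') * (w j * w j')
        ∂(Measure.pi fun _ : Fin k => gaussianReal 0 v))
        = (u j * u j') * if j = j' then (v:ℝ) else 0 := fun j' => by
      rw [integral_const_mul, my_coord_mul_integral hv]
    rw [Finset.sum_congr rfl fun j' _ => this j']
    rw [Finset.sum_eq_single j (fun j' _ hj' => by simp [Ne.symm hj']) (by simp)]
    simp [sq]
  rw [Finset.sum_congr rfl fun j _ => this j, ← Finset.sum_mul]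
  ring

end rho
section relu
variable {k d : ℕ} {v : NNReal}

lemma my_L_measurable (u : Fin k → ℝ) :
    Measurable (fun w : Fin k → ℝ => ∑ j, u j * w j) :=
  Finset.measurable_fun_sum _ fun j _ => by fun_prop

lemma my_relu_measurable (u : Fin k → ℝ) (c : ℝ) :
    Measurable (fun w : Fin k → ℝ => max (c * ∑ j, u j * w j) 0 ^ 2) :=
  (((my_L_measurable u).const_mul c).max measurable_const).pow_const 2

lemma my_relu_integrable (hv : v ≠ 0) (u : Fin k → ℝ) (c : ℝ) :
    Integrable (fun w : Fin k → ℝ => max (c * ∑ j, u j * w j) 0 ^ 2)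
      (Measure.pi fun _ : Fin k => gaussianReal 0 v) := by
  refine Integrable.mono' (((my_L_memℒp hv u).const_mul c).integrable_sq)
    (my_relu_measurable u c).aestronglyMeasurable ?_
  filter_upwards with w
  rw [Real.norm_eq_abs, abs_of_nonneg (by positivity)]
  rcases le_or_gt (c * ∑ j, u j * w j) 0 with h | h
  · rw [max_eq_right h]
    simpa using sq_nonneg (c * ∑ j, u j * w j)
  · rw [max_eq_left h.le]

lemma my_relu_moment (hv : v ≠ 0) (u : Fin k → ℝ) (c : ℝ) :
    ∫ w : Fin k → ℝ, max (c * ∑ j, u j * w j) 0 ^ 2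
      ∂(Measure.pi fun _ : Fin k => gaussianReal 0 v)
      = c ^ 2 * ((v:ℝ) * ∑ j, u j ^ 2) / 2 := by
  set ρ := Measure.pi fun _ : Fin k => gaussianReal 0 v with hρ
  set L := fun w : Fin k → ℝ => ∑ j, u j * w j with hL
  have hswap : ∫ w, max (c * L w) 0 ^ 2 ∂ρ = ∫ w, max (-c * L w) 0 ^ 2 ∂ρ := by
    have hmeas : AEStronglyMeasurable (fun w : Fin k → ℝ => max (c * L w) 0 ^ 2)
        (ρ.map (fun w => -w)) := by
      rw [hρ, my_rho_map_neg]
      exact (my_relu_measurable u c).aestronglyMeasurable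
    have h := integral_map (μ := ρ) (φ := fun w : Fin k → ℝ => -w)
      measurable_neg.aemeasurable hmeas
    rw [hρ, my_rho_map_neg, ← hρ] at h
    rw [h]
    congr 1 with w
    have hLneg : L (-w) = - L w := by
      simp [hL, mul_neg]
    rw [hLneg]
    ring_nf
  have hsum : ∀ w, max (c * L w) 0 ^ 2 + max (-c * L w) 0 ^ 2 = (c * L w) ^ 2 := by
    intro w
    rcases le_total (c * L w) 0 with h | h
    · rw [max_eq_right h, max_eq_left (by nlinarith)]
      ring
    · rw [max_eq_left h, max_eq_right (by nlinarith)]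
      ring
  have h2I : (∫ w, max (c * L w) 0 ^ 2 ∂ρ) + (∫ w, max (-c * L w) 0 ^ 2 ∂ρ)
      = ∫ w, (c * L w) ^ 2 ∂ρ := by
    rw [← integral_add (my_relu_integrable hv u c) (my_relu_integrable hv u (-c))]
    exact integral_congr_ae (Filter.Eventually.of_forall fun w => hsum w)
  have hLsq : ∫ w, (c * L w) ^ 2 ∂ρ = c ^ 2 * ((v:ℝ) * ∑ j, u j ^ 2) := by
    have : (fun w => (c * L w) ^ 2) = fun w => c ^ 2 * (L w) ^ 2 := by
      funext w; ring
    rw [this, integral_const_mul, hρ, hL, my_L_sq_integral hv u]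
  rw [← hswap] at h2I
  linarith [h2I, hLsq]

lemma my_sum_level (hv : v ≠ 0) (u : Fin k → ℝ) (c : ℝ) :
    ∫ W : Fin d → Fin k → ℝ, ∑ r, max (c * ∑ j, u j * W r j) 0 ^ 2
      ∂(Measure.pi fun _ : Fin d => Measure.pi fun _ : Fin k => gaussianReal 0 v)
      = d * (c ^ 2 * ((v:ℝ) * ∑ j, u j ^ 2) / 2) := by
  have hint : ∀ r : Fin d, Integrable
      (fun W : Fin d → Fin k → ℝ => max (c * ∑ j, u j * W r j) 0 ^ 2)
      (Measure.pi fun _ : Fin d => Measure.pi fun _ : Fin k => gaussianReal 0 v) :=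
    fun r => my_integrable_eval _ r (my_relu_measurable u c) (my_relu_integrable hv u c)
  rw [integral_finset_sum _ fun r _ => hint r]
  have : ∀ r : Fin d, ∫ W : Fin d → Fin k → ℝ, max (c * ∑ j, u j * W r j) 0 ^ 2
      ∂(Measure.pi fun _ : Fin d => Measure.pi fun _ : Fin k => gaussianReal 0 v)
      = c ^ 2 * ((v:ℝ) * ∑ j, u j ^ 2) / 2 := fun r => by
    rw [my_integral_eval _ r (my_relu_measurable u c), my_relu_moment hv u c]
  rw [Finset.sum_congr rfl fun r _ => this r, Finset.sum_const, Finset.card_univ,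
    Fintype.card_fin, nsmul_eq_mul]

end relu

/-- Stability of the invariant representation under a random ReLU + recentering layer
with appropriately scaled Gaussian weights. -/
theorem invariant_representation_stable {k n d : ℕ} (hn : 2 ≤ n) (hd : 0 < d)
    (x : Fin n → Fin k → ℝ) (ν : Fin k → ℝ) (i₀ : Fin n) (hi₀ : (i₀ : ℕ) = 0)
    (hν : ν = (((n : ℝ) - 1)⁻¹) • ∑ i ∈ Finset.univ.filter (fun i : Fin n => i ≠ i₀), x i)
    (hx₁norm : ∑ j, (x i₀ j) ^ 2 = 1)
    (hνnorm : ∑ j, (ν j) ^ 2 = 1 / ((n : ℝ) - 1) ^ 2)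
    (horth : ∑ j, x i₀ j * ν j = 0)
    (hclust : ∀ i : Fin n, i ≠ i₀ → x i = ν)
    (α : ℝ) (hα : α = (n : ℝ) ^ 2 / ((n : ℝ) ^ 2 - 2 * n + 2))
    (v : NNReal) (hv : (v : ℝ) = 2 * α / d)
    (μW : (Fin d → Fin k → ℝ) → Fin d → ℝ)
    (hμW : ∀ W, μW W = ((n : ℝ)⁻¹) • ∑ i, (Matrix.of W).mulVec (x i)) :
    (∫ W : Fin d → Fin k → ℝ,
        ∑ r, (max (((Matrix.of W).mulVec (x i₀) - μW W) r) 0) ^ 2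
        ∂(Measure.pi fun _ : Fin d => Measure.pi fun _ : Fin k => gaussianReal 0 v)
      = 1) ∧
    (∫ W : Fin d → Fin k → ℝ,
        ∑ r, (max (((Matrix.of W).mulVec ν - μW W) r) 0) ^ 2
        ∂(Measure.pi fun _ : Fin d => Measure.pi fun _ : Fin k => gaussianReal 0 v)
      = 1 / ((n : ℝ) - 1) ^ 2) ∧
    (∀ W : Fin d → Fin k → ℝ,
      ∑ r, max (((Matrix.of W).mulVec (x i₀) - μW W) r) 0 *
            max (((Matrix.of W).mulVec ν - μW W) r) 0 = 0) := by
  have hn2 : (2:ℝ) ≤ (n:ℝ) := by exact_mod_cast hn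
  have hN0 : (n:ℝ) ≠ 0 := by linarith
  have hN1 : (n:ℝ) - 1 ≠ 0 := by linarith
  have hden : (n:ℝ)^2 - 2*(n:ℝ) + 2 ≠ 0 := by nlinarith
  have hd0 : (d:ℝ) ≠ 0 := Nat.cast_ne_zero.mpr hd.ne'
  have hαpos : 0 < α := by
    rw [hα]; apply div_pos (by nlinarith) (by nlinarith)
  have hv0 : v ≠ 0 := by
    have hvpos : (0:ℝ) < v := by
      rw [hv]
      have : (0:ℝ) < (d:ℝ) := by positivity
      positivity
    intro h
    rw [h] at hvpos
    simp at hvpos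
  set u : Fin k → ℝ := fun j => x i₀ j - ν j with hu
  have hS : ∑ j, u j ^ 2 = 1 + (((n:ℝ) - 1)^2)⁻¹ := by
    have hexp : ∀ j, u j ^ 2 = x i₀ j ^2 - 2*(x i₀ j * ν j) + ν j ^2 := fun j => by
      simp only [hu]; ring
    rw [Finset.sum_congr rfl fun j _ => hexp j, Finset.sum_add_distrib,
      Finset.sum_sub_distrib, ← Finset.mul_sum, horth, hx₁norm, hνnorm, one_div]
    ring
  have key : ∀ (W : Fin d → Fin k → ℝ) (r : Fin d),
      ((Matrix.of W).mulVec (x i₀) - μW W) r = (((n:ℝ)-1)/n) * ∑ j, u j * W r j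
      ∧ ((Matrix.of W).mulVec ν - μW W) r = (-(1/(n:ℝ))) * ∑ j, u j * W r j := by
    intro W r
    have hmv : ∀ y : Fin k → ℝ, (Matrix.of W).mulVec y r = ∑ j, W r j * y j := fun y => by
      simp [Matrix.mulVec, dotProduct]
    have hAB : ∑ j, u j * W r j = (∑ j, W r j * x i₀ j) - ∑ j, W r j * ν j := by
      rw [← Finset.sum_sub_distrib]
      exact Finset.sum_congr rfl fun j _ => by simp only [hu]; ring
    have hμr : μW W r
        = (n:ℝ)⁻¹ * ((∑ j, W r j * x i₀ j) + ((n:ℝ)-1) * ∑ j, W r j * ν j) := by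
      rw [hμW W]
      simp only [Pi.smul_apply, smul_eq_mul, Finset.sum_apply]
      congr 1
      rw [Finset.sum_congr rfl (fun i _ => hmv (x i)),
        ← Finset.add_sum_erase _ _ (Finset.mem_univ i₀)]
      congr 1
      have hcongr : ∀ i ∈ Finset.univ.erase i₀,
          (∑ j, W r j * x i j) = ∑ j, W r j * ν j := fun i hi => by
        rw [hclust i (Finset.ne_of_mem_erase hi)]
      rw [Finset.sum_congr rfl hcongr, Finset.sum_const,
        Finset.card_erase_of_mem (Finset.mem_univ i₀), Finset.card_univ, Fintype.card_fin,
        nsmul_eq_mul]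
      congr 1
      rw [Nat.cast_sub (by omega), Nat.cast_one]
    refine ⟨?_, ?_⟩
    · rw [Pi.sub_apply, hmv (x i₀), hμr, hAB]; field_simp; ring
    · rw [Pi.sub_apply, hmv ν, hμr, hAB]; field_simp; ring
  refine ⟨?_, ?_, ?_⟩
  · have heq : (fun W : Fin d → Fin k → ℝ =>
        ∑ r, max (((Matrix.of W).mulVec (x i₀) - μW W) r) 0 ^ 2)
        = fun W => ∑ r, max ((((n:ℝ)-1)/n) * ∑ j, u j * W r j) 0 ^ 2 := by
      funext W; exact Finset.sum_congr rfl fun r _ => by rw [(key W r).1]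
    rw [heq, my_sum_level hv0 u _, hv, hS, hα]
    field_simp
    have hden' : (2 - (n:ℝ) * 2 + (n:ℝ) ^ 2) ≠ 0 := by nlinarith
    ring_nf
    rw [show -((n:ℝ) * (2 - ↑n * 2 + ↑n ^ 2)⁻¹ * 2) + ↑n ^ 2 * (2 - ↑n * 2 + ↑n ^ 2)⁻¹ + (2 - ↑n * 2 + ↑n ^ 2)⁻¹ * 2 = (2 - ↑n * 2 + ↑n ^ 2) * (2 - ↑n * 2 + ↑n ^ 2)⁻¹ by ring, mul_inv_cancel₀ hden']
  · have heq : (fun W : Fin d → Fin k → ℝ =>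
        ∑ r, max (((Matrix.of W).mulVec ν - μW W) r) 0 ^ 2)
        = fun W => ∑ r, max ((-(1/(n:ℝ))) * ∑ j, u j * W r j) 0 ^ 2 := by
      funext W; exact Finset.sum_congr rfl fun r _ => by rw [(key W r).2]
    rw [heq, my_sum_level hv0 u _, hv, hS, hα]
    field_simp
    have hden' : (2 - (n:ℝ) * 2 + (n:ℝ) ^ 2) ≠ 0 := by nlinarith
    ring_nf
    rw [show -((n:ℝ) * (2 - ↑n * 2 + ↑n ^ 2)⁻¹ * 2) + ↑n ^ 2 * (2 - ↑n * 2 + ↑n ^ 2)⁻¹ + (2 - ↑n * 2 + ↑n ^ 2)⁻¹ * 2 = (2 - ↑n * 2 + ↑n ^ 2) * (2 - ↑n * 2 + ↑n ^ 2)⁻¹ by ring, mul_inv_cancel₀ hden']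
  · intro W
    refine Finset.sum_eq_zero fun r _ => ?_
    rw [(key W r).1, (key W r).2]
    have hc1 : 0 ≤ ((n:ℝ)-1)/(n:ℝ) := div_nonneg (by linarith) (by linarith)
    have hc2 : -(1/(n:ℝ)) ≤ 0 := neg_nonpos.mpr (by positivity)
    rcases le_total (∑ j, u j * W r j) 0 with h | h
    · rw [max_eq_right (mul_nonpos_of_nonneg_of_nonpos hc1 h), zero_mul]
    · rw [max_eq_right (mul_nonpos_of_nonpos_of_nonneg hc2 h), mul_zero]
end
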